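/- Let Π = Π(ρ, F) be the transition matrix of the network formation game on S = (E → Bool). Then there exists a unique stationary distribution: a unique vector π : S → ℝ such that π g ≥ 0 for all g ∈ S, ∑_{g ∈ S} π g = 1, and ∑_{g ∈ S} π g * Π g w = π w for every w ∈ S. -/
import Mathlib


open Matrix Finset Filter

/-- Flip the link `e` in network `g`. -/
def flipL {E : Type*} [DecidableEq E] (e : E) (g : E → Bool) : E → Bool :=
  Function.update g e (!(g e))

/-- The one-step transition matrix of the network formation game. -/
noncomputable def netPi {E : Type*} [DecidableEq E] [Fintype E]
    (ρ : E → (E → Bool) → ℝ) (F : (E → Bool) → E → ℝ) :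
    Matrix (E → Bool) (E → Bool) ℝ :=
  Matrix.of fun g w =>
    if g = w then ∑ e, ρ e g * (1 - F g e)
    else ∑ e, if w = flipL e g then ρ e g * F g e else 0

/-- A meeting function: strictly positive selection probabilities summing to one. -/
def IsMeeting {E : Type*} [Fintype E] (ρ : E → (E → Bool) → ℝ) : Prop :=
  (∀ e g, 0 < ρ e g) ∧ ∀ g, ∑ e, ρ e g = 1

/-- An acceptance function: probabilities strictly between 0 and 1, complementary under flips. -/
def IsAcceptance {E : Type*} [DecidableEq E] (F : (E → Bool) → E → ℝ) : Prop :=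
  (∀ g e, 0 < F g e ∧ F g e < 1) ∧ ∀ g e, F g e + F (flipL e g) e = 1

section Aux

variable {E : Type*} [DecidableEq E] [Fintype E]

lemma flipL_self (e : E) (g : E → Bool) : flipL e g e = !(g e) := by
  simp [flipL]

lemma flipL_ne_apply (e e' : E) (g : E → Bool) (h : e' ≠ e) : flipL e g e' = g e' := by
  simp [flipL, Function.update_of_ne h]

lemma flipL_ne (e : E) (g : E → Bool) : flipL e g ≠ g := by
  intro h
  have := congrFun h e
  simp [flipL] at this

variable {ρ : E → (E → Bool) → ℝ} {F : (E → Bool) → E → ℝ}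
  (hρ : IsMeeting ρ) (hF : IsAcceptance F)

include hρ hF

lemma netPi_nonneg (g w : E → Bool) : 0 ≤ netPi ρ F g w := by
  unfold netPi
  simp only [Matrix.of_apply]
  split
  · exact Finset.sum_nonneg fun e _ => le_of_lt
      (mul_pos (hρ.1 e g) (by linarith [(hF.1 g e).2]))
  · exact Finset.sum_nonneg fun e _ => by
      split
      · exact le_of_lt (mul_pos (hρ.1 e g) (hF.1 g e).1)
      · exact le_refl 0

lemma netPi_diag_pos [Nonempty E] (g : E → Bool) : 0 < netPi ρ F g g := by
  unfold netPi
  simp only [Matrix.of_apply, if_pos rfl]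
  exact Finset.sum_pos (fun e _ => mul_pos (hρ.1 e g) (by linarith [(hF.1 g e).2]))
    univ_nonempty

lemma netPi_flip_pos (g : E → Bool) (e : E) : 0 < netPi ρ F g (flipL e g) := by
  unfold netPi
  simp only [Matrix.of_apply, if_neg (Ne.symm (flipL_ne e g))]
  refine Finset.sum_pos' (fun e' _ => ?_) ⟨e, Finset.mem_univ e, ?_⟩
  · split
    · exact le_of_lt (mul_pos (hρ.1 e' g) (hF.1 g e').1)
    · exact le_refl 0
  · rw [if_pos rfl]
    exact mul_pos (hρ.1 e g) (hF.1 g e).1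

lemma netPi_row_sum (g : E → Bool) : ∑ w, netPi ρ F g w = 1 := by
  have h1 : ∑ w, netPi ρ F g w
      = netPi ρ F g g + ∑ w ∈ Finset.univ.erase g, netPi ρ F g w := by
    rw [Finset.add_sum_erase _ _ (Finset.mem_univ g)]
  have h2 : ∑ w ∈ Finset.univ.erase g, netPi ρ F g w = ∑ e, ρ e g * F g e := by
    have : ∀ w ∈ Finset.univ.erase g, netPi ρ F g w
        = ∑ e, if w = flipL e g then ρ e g * F g e else 0 := by
      intro w hw
      unfold netPi
      simp only [Matrix.of_apply]
      rw [if_neg (Ne.symm (Finset.ne_of_mem_erase hw))]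
    rw [Finset.sum_congr rfl this, Finset.sum_comm]
    refine Finset.sum_congr rfl fun e _ => ?_
    rw [Finset.sum_ite_eq' (Finset.univ.erase g) (flipL e g)]
    rw [if_pos (Finset.mem_erase.2 ⟨flipL_ne e g, Finset.mem_univ _⟩)]
  rw [h1, h2]
  unfold netPi
  simp only [Matrix.of_apply, eq_self_iff_true, if_true]
  rw [← Finset.sum_add_distrib]
  have : ∀ e ∈ Finset.univ, ρ e g * (1 - F g e) + ρ e g * F g e = ρ e g := by
    intro e _; ring
  rw [Finset.sum_congr rfl this, hρ.2 g]

end Aux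

section Power

variable {E : Type*} [DecidableEq E] [Fintype E] [Nonempty E]
variable {ρ : E → (E → Bool) → ℝ} {F : (E → Bool) → E → ℝ}
  (hρ : IsMeeting ρ) (hF : IsAcceptance F)

include hρ hF

lemma netPi_pow_nonneg (k : ℕ) (g w : E → Bool) : 0 ≤ (netPi ρ F ^ k) g w := by
  induction k generalizing g w with
  | zero => simp [Matrix.one_apply]; split <;> norm_num
  | succ k ih =>
    rw [pow_succ, Matrix.mul_apply]
    exact Finset.sum_nonneg fun u _ => mul_nonneg (ih g u) (netPi_nonneg hρ hF u w)

lemma netPi_pow_row_sum (k : ℕ) (g : E → Bool) : ∑ w, (netPi ρ F ^ k) g w = 1 := by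
  induction k generalizing g with
  | zero => simp [Matrix.one_apply]
  | succ k ih =>
    simp only [pow_succ, Matrix.mul_apply]
    rw [Finset.sum_comm]
    calc ∑ u, ∑ w, (netPi ρ F ^ k) g u * netPi ρ F u w
        = ∑ u, (netPi ρ F ^ k) g u * ∑ w, netPi ρ F u w := by
          refine Finset.sum_congr rfl fun u _ => ?_; rw [Finset.mul_sum]
      _ = ∑ u, (netPi ρ F ^ k) g u := by
          refine Finset.sum_congr rfl fun u _ => ?_; rw [netPi_row_sum hρ hF, mul_one]
      _ = 1 := ih g

lemma netPi_pow_pos (k : ℕ) (g w : E → Bool)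
    (h : (Finset.univ.filter fun e => g e ≠ w e).card ≤ k) :
    0 < (netPi ρ F ^ k) g w := by
  induction k generalizing g w with
  | zero =>
    have : g = w := by
      funext e
      by_contra he
      have : e ∈ Finset.univ.filter fun e => g e ≠ w e := by simp [he]
      have := Finset.card_pos.2 ⟨e, this⟩
      omega
    subst this
    simp [Matrix.one_apply]
  | succ k ih =>
    rw [pow_succ', Matrix.mul_apply]
    by_cases hgw : g = w
    · subst hgw
      refine Finset.sum_pos' (fun u _ => mul_nonneg (netPi_nonneg hρ hF g u)
        (netPi_pow_nonneg hρ hF k u g)) ⟨g, Finset.mem_univ g, ?_⟩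
      exact mul_pos (netPi_diag_pos hρ hF g) (ih g g (by simp))
    · obtain ⟨e₀, he₀⟩ : ∃ e, g e ≠ w e := by
        by_contra hc
        push_neg at hc
        exact hgw (funext hc)
      refine Finset.sum_pos' (fun u _ => mul_nonneg (netPi_nonneg hρ hF g u)
        (netPi_pow_nonneg hρ hF k u w)) ⟨flipL e₀ g, Finset.mem_univ _, ?_⟩
      refine mul_pos (netPi_flip_pos hρ hF g e₀) (ih (flipL e₀ g) w ?_)
      have hsub : (Finset.univ.filter fun e => flipL e₀ g e ≠ w e)
          = (Finset.univ.filter fun e => g e ≠ w e).erase e₀ := by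
        ext e
        simp only [Finset.mem_filter, Finset.mem_erase, Finset.mem_univ, true_and]
        constructor
        · intro he
          rcases eq_or_ne e e₀ with rfl | hne
          · exfalso
            apply he
            rw [flipL_self]
            cases hg : g e <;> cases hw : w e <;> simp_all
          · exact ⟨hne, by rwa [flipL_ne_apply e₀ e g hne] at he⟩
        · rintro ⟨hne, he⟩
          rwa [flipL_ne_apply e₀ e g hne]
      rw [hsub]
      have hmem : e₀ ∈ Finset.univ.filter fun e => g e ≠ w e := by simp [he₀]
      have := Finset.card_erase_of_mem hmem
      have hpos := Finset.card_pos.2 ⟨e₀, hmem⟩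
      omega

end Power

section Sign

/-- Sign lemma: a left-fixed vector of a strictly positive row-stochastic matrix
has constant sign. -/
lemma sign_lemma {S : Type*} [Fintype S] [Nonempty S] {A : Matrix S S ℝ}
    (hpos : ∀ g w, 0 < A g w) (hrow : ∀ g, ∑ w, A g w = 1)
    {v : S → ℝ} (hv : ∀ w, ∑ g, v g * A g w = v w) :
    (∀ g, 0 ≤ v g) ∨ (∀ g, v g ≤ 0) := by
  by_contra hc
  push_neg at hc
  obtain ⟨⟨a, ha⟩, b, hb⟩ := hc
  -- ha : v a < 0, hb : 0 < v b
  have key : ∀ w, |v w| < ∑ g, |v g| * A g w := by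
    intro w
    have habs : ∀ g, |v g * A g w| = |v g| * A g w := fun g => by
      rw [abs_mul, abs_of_pos (hpos g w)]
    rw [← hv w, abs_lt]
    constructor
    · have h2 : ∑ g, -(v g * A g w) < ∑ g, |v g| * A g w := by
        refine Finset.sum_lt_sum (fun g _ => by rw [← habs g]; exact neg_le_abs _)
          ⟨b, Finset.mem_univ b, ?_⟩
        rw [← habs b]
        have hx : 0 < v b * A b w := mul_pos hb (hpos b w)
        have := abs_of_pos hx
        linarith
      rw [Finset.sum_neg_distrib] at h2
      linarith
    · refine Finset.sum_lt_sum (fun g _ => by rw [← habs g]; exact le_abs_self _)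
        ⟨a, Finset.mem_univ a, ?_⟩
      rw [← habs a]
      have hx : v a * A a w < 0 := mul_neg_of_neg_of_pos ha (hpos a w)
      have := abs_of_neg hx
      linarith
  have : ∑ w, |v w| < ∑ w, ∑ g, |v g| * A g w :=
    Finset.sum_lt_sum_of_nonempty Finset.univ_nonempty (fun w _ => key w)
  rw [Finset.sum_comm] at this
  have heq : ∑ g, ∑ w, |v g| * A g w = ∑ g, |v g| := by
    refine Finset.sum_congr rfl fun g _ => ?_
    rw [← Finset.mul_sum, hrow g, mul_one]
  rw [heq] at this
  exact lt_irrefl _ this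

end Sign

section Main

variable {E : Type*} [DecidableEq E] [Fintype E] [Nonempty E]
variable {ρ : E → (E → Bool) → ℝ} {F : (E → Bool) → E → ℝ}

lemma fixed_pow {v : (E → Bool) → ℝ}
    (hv : ∀ w, ∑ g, v g * netPi ρ F g w = v w) (k : ℕ) :
    ∀ w, ∑ g, v g * (netPi ρ F ^ k) g w = v w := by
  induction k with
  | zero =>
    intro w
    simp only [pow_zero, Matrix.one_apply, mul_ite, mul_one, mul_zero]
    rw [Finset.sum_ite_eq' Finset.univ w v, if_pos (Finset.mem_univ w)]
  | succ k ih =>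
    intro w
    rw [pow_succ]
    simp only [Matrix.mul_apply]
    calc ∑ g, v g * ∑ u, (netPi ρ F ^ k) g u * netPi ρ F u w
        = ∑ g, ∑ u, v g * (netPi ρ F ^ k) g u * netPi ρ F u w := by
          refine Finset.sum_congr rfl fun g _ => ?_
          rw [Finset.mul_sum]
          exact Finset.sum_congr rfl fun u _ => (mul_assoc _ _ _).symm
      _ = ∑ u, ∑ g, v g * (netPi ρ F ^ k) g u * netPi ρ F u w := Finset.sum_comm
      _ = ∑ u, (∑ g, v g * (netPi ρ F ^ k) g u) * netPi ρ F u w := by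
          refine Finset.sum_congr rfl fun u _ => ?_
          rw [Finset.sum_mul]
      _ = ∑ u, v u * netPi ρ F u w := by
          refine Finset.sum_congr rfl fun u _ => ?_
          rw [ih u]
      _ = v w := hv w

theorem exists_unique_stationary'
    (hρ : IsMeeting ρ) (hF : IsAcceptance F) :
    ∃! π : (E → Bool) → ℝ, (∀ g, 0 ≤ π g) ∧ (∑ g, π g = 1) ∧
      ∀ w, ∑ g, π g * netPi ρ F g w = π w := by
  set A := netPi ρ F with hA
  set N := Fintype.card E with hN
  -- the N-th power is strictly positive and row-stochastic
  have hApos : ∀ g w, 0 < (A ^ N) g w := fun g w =>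
    netPi_pow_pos hρ hF N g w (le_trans (Finset.card_filter_le _ _) (by simp [hN]))
  have hArow : ∀ g, ∑ w, (A ^ N) g w = 1 := netPi_pow_row_sum hρ hF N
  -- existence of a nonzero left fixed vector via determinants
  have hdet : (A - 1).det = 0 := by
    rw [← Matrix.exists_mulVec_eq_zero_iff]
    refine ⟨fun _ => (1 : ℝ), ?_, ?_⟩
    · intro h
      have := congrFun h (Classical.arbitrary _)
      norm_num at this
    · funext g
      simp only [Matrix.sub_mulVec, Matrix.mulVec, dotProduct, Pi.sub_apply, Pi.zero_apply]
      have : ∑ x, (A - 1) g x * 1 = ∑ x, (A g x - (1 : Matrix _ _ ℝ) g x) := by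
        refine Finset.sum_congr rfl fun x _ => by rw [mul_one]; rfl
      rw [this, Finset.sum_sub_distrib, netPi_row_sum hρ hF g]
      have h1 : ∑ x, (1 : Matrix (E → Bool) (E → Bool) ℝ) g x = 1 := by
        simp [Matrix.one_apply]
      rw [h1, sub_self]
  have hdetT : (Aᵀ - 1).det = 0 := by
    have : Aᵀ - 1 = (A - 1)ᵀ := by rw [Matrix.transpose_sub, Matrix.transpose_one]
    rw [this, Matrix.det_transpose, hdet]
  obtain ⟨v, hv0, hvfix⟩ := Matrix.exists_mulVec_eq_zero_iff.2 hdetT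
  -- v is a left fixed vector of A
  have hvA : ∀ w, ∑ g, v g * A g w = v w := by
    intro w
    have := congrFun hvfix w
    simp only [Matrix.sub_mulVec, Matrix.one_mulVec, Pi.sub_apply, Pi.zero_apply,
      sub_eq_zero] at this
    rw [← this]
    simp only [Matrix.mulVec, dotProduct, Matrix.transpose_apply]
    exact Finset.sum_congr rfl fun g _ => mul_comm _ _
  -- v has constant sign; WLOG obtain a nonnegative nonzero fixed vector u
  have hsign : ∀ u : (E → Bool) → ℝ, (∀ w, ∑ g, u g * A g w = u w) →
      (∀ g, 0 ≤ u g) ∨ (∀ g, u g ≤ 0) := by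
    intro u hu
    exact sign_lemma hApos hArow (fixed_pow hu N)
  obtain ⟨u, hu0, hufix, hunn⟩ :
      ∃ u : (E → Bool) → ℝ, u ≠ 0 ∧ (∀ w, ∑ g, u g * A g w = u w) ∧ ∀ g, 0 ≤ u g := by
    rcases hsign v hvA with h | h
    · exact ⟨v, hv0, hvA, h⟩
    · refine ⟨-v, by simpa using hv0, fun w => ?_, fun g => by simpa using h g⟩
      simp only [Pi.neg_apply, neg_mul]
      rw [Finset.sum_neg_distrib, hvA w]
  -- normalize
  have hs : 0 < ∑ g, u g := by
    refine Finset.sum_pos' (fun g _ => hunn g) ?_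
    obtain ⟨g, hg⟩ := Function.ne_iff.1 hu0
    exact ⟨g, Finset.mem_univ g, lt_of_le_of_ne (hunn g) (Ne.symm hg)⟩
  set s := ∑ g, u g with hsdef
  refine ⟨fun g => u g / s, ⟨fun g => div_nonneg (hunn g) hs.le, ?_, ?_⟩, ?_⟩
  · rw [← Finset.sum_div, ← hsdef, div_self hs.ne']
  · intro w
    calc ∑ g, u g / s * A g w = (∑ g, u g * A g w) / s := by
          rw [Finset.sum_div]
          exact Finset.sum_congr rfl fun g _ => by ring
      _ = u w / s := by rw [hufix w]
  -- uniqueness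
  · rintro π' ⟨hπ'nn, hπ'sum, hπ'fix⟩
    have hπnn : ∀ g, (0:ℝ) ≤ u g / s := fun g => div_nonneg (hunn g) hs.le
    have hπsum : ∑ g, u g / s = 1 := by rw [← Finset.sum_div, ← hsdef, div_self hs.ne']
    set d : (E → Bool) → ℝ := fun g => π' g - u g / s with hd
    have hdfix : ∀ w, ∑ g, d g * A g w = d w := by
      intro w
      simp only [hd]
      calc ∑ g, (π' g - u g / s) * A g w
          = (∑ g, π' g * A g w) - ∑ g, u g / s * A g w := by
            rw [← Finset.sum_sub_distrib]
            exact Finset.sum_congr rfl fun g _ => by ring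
        _ = π' w - u w / s := by
            rw [hπ'fix w]
            congr 1
            calc ∑ g, u g / s * A g w = (∑ g, u g * A g w) / s := by
                  rw [Finset.sum_div]
                  exact Finset.sum_congr rfl fun g _ => by ring
              _ = u w / s := by rw [hufix w]
    have hdsum : ∑ g, d g = 0 := by
      simp only [hd]
      rw [Finset.sum_sub_distrib, hπ'sum, hπsum, sub_self]
    have : ∀ g, d g = 0 := by
      rcases hsign d hdfix with h | h
      · intro g
        exact (Finset.sum_eq_zero_iff_of_nonneg fun g _ => h g).1 hdsum g (Finset.mem_univ g)
      · intro g
        exact (Finset.sum_eq_zero_iff_of_nonpos fun g _ => h g).1 hdsum g (Finset.mem_univ g)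
    funext g
    have := this g
    simp only [hd] at this
    linarith

end Main


/-- Existence and uniqueness of the stationary distribution of the network formation game. -/
theorem exists_unique_stationary {E : Type*} [DecidableEq E] [Fintype E] [Nonempty E]
    (ρ : E → (E → Bool) → ℝ) (F : (E → Bool) → E → ℝ)
    (hρ : IsMeeting ρ) (hF : IsAcceptance F) :
    ∃! π : (E → Bool) → ℝ, (∀ g, 0 ≤ π g) ∧ (∑ g, π g = 1) ∧
      ∀ w, ∑ g, π g * netPi ρ F g w = π w := by
  exact exists_unique_stationary' hρ hF
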